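/- Suppose G_z is a positive definite Hermitian M×M complex matrix and W_s ∈ ℂ^{M×K} is a fixed matrix of full column rank. Then the function J(W_z) = trace(W_z^H G_z W_z) − 2 log|det [W_s, W_z]|, defined on the set of matrices W_z ∈ ℂ^{M×(M−K)} such that [W_s, W_z] is invertible, is bounded from below and attains its minimum at some such W_z. -/

import Mathlib

/- STATEMENT 1.
M×M complex matrices are encoded as matrices indexed by `Fin K ⊕ Fin L`,
where `M = K + L`, `K ≥ 1`, `L = M - K ≥ 1`. `[W_s, W_z]` is
`Matrix.fromCols W_s W_z`. Full column rank of `W_s` is expressed as linear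
independence of its columns (the rows of `W_sᵀ`). -/

open Matrix
open scoped ComplexOrder

set_option maxHeartbeats 1000000

namespace JzAux

set_option linter.unusedSectionVars false

variable {m n : Type*} [Fintype m] [Fintype n] [DecidableEq m] [DecidableEq n]

lemma posDef_conj {G : Matrix n n ℂ} (hG : G.PosDef)
    (B : Matrix n m ℂ) (hB : ∀ x, B *ᵥ x = 0 → x = 0) : (Bᴴ * G * B).PosDef := by
  refine Matrix.PosDef.of_dotProduct_mulVec_pos (isHermitian_conjTranspose_mul_mul B hG.1) fun x hx => ?_
  have h1 : B *ᵥ x ≠ 0 := fun h => hx (hB x h)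
  have := hG.dotProduct_mulVec_pos h1
  simpa only [star_mulVec, dotProduct_mulVec, vecMul_vecMul] using this

lemma det_re_pos {X : Matrix n n ℂ} (hX : X.PosDef) : 0 < X.det.re := by
  have h := hX.det_pos
  exact (Complex.lt_def.mp h).1

lemma det_eq_re {X : Matrix n n ℂ} (hX : X.PosDef) : X.det = (X.det.re : ℂ) := by
  have h := hX.det_pos
  have him : X.det.im = 0 := ((Complex.lt_def.mp h).2).symm
  exact Complex.ext (by simp) (by simp [him])

lemma trace_re_nonneg {X : Matrix n n ℂ} (hX : X.PosSemidef) : 0 ≤ X.trace.re := by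
  rw [Matrix.trace, Complex.re_sum]
  apply Finset.sum_nonneg
  intro i _
  have h := hX.dotProduct_mulVec_nonneg (Pi.single i 1)
  have hd : dotProduct (star (Pi.single i 1 : n → ℂ)) (X *ᵥ Pi.single i 1) = X.diag i := by
    simp [dotProduct, mulVec, Pi.single_apply, apply_ite, Finset.sum_ite_eq,
      Finset.sum_ite_eq', Matrix.diag]
  rw [hd] at h
  exact (Complex.le_def.mp h).1

lemma card_le_trace_re_sub_log_det {X : Matrix n n ℂ} (hX : X.PosDef) :
    (Fintype.card n : ℝ) ≤ X.trace.re - Real.log X.det.re := by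
  have hlam := hX.eigenvalues_pos
  have htr : X.trace.re = ∑ i, hX.1.eigenvalues i := by
    have hsp := hX.1.spectral_theorem
    have hU : (star (hX.1.eigenvectorUnitary : Matrix n n ℂ)) *
        (hX.1.eigenvectorUnitary : Matrix n n ℂ) = 1 :=
      Matrix.mem_unitaryGroup_iff'.mp (hX.1.eigenvectorUnitary).2
    have : X.trace = ∑ i, (hX.1.eigenvalues i : ℂ) := by
      conv_lhs => rw [hsp]
      rw [Unitary.conjStarAlgAut_apply, Matrix.trace_mul_cycle, hU, Matrix.one_mul, Matrix.trace_diagonal]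
      rfl
    rw [this, Complex.re_sum]
    simp
  have hdet : X.det.re = ∏ i, hX.1.eigenvalues i := by
    have := hX.1.det_eq_prod_eigenvalues
    rw [this]
    norm_cast
  rw [htr, hdet, Real.log_prod (fun i _ => (hlam i).ne'), ← Finset.sum_sub_distrib]
  have hstep : ∀ i ∈ Finset.univ, (1:ℝ) ≤ hX.1.eigenvalues i - Real.log (hX.1.eigenvalues i) :=
    fun i _ => by have := Real.log_le_sub_one_of_pos (hlam i); linarith
  calc (Fintype.card n : ℝ) = ∑ _i : n, (1:ℝ) := by simp
    _ ≤ _ := Finset.sum_le_sum hstep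

lemma schur_posDef {A : Matrix m m ℂ} {B : Matrix m n ℂ} {D : Matrix n n ℂ}
    [Invertible A] (hA : A.IsHermitian)
    (h : (fromBlocks A B Bᴴ D).PosDef) : (D - Bᴴ * A⁻¹ * B).PosDef := by
  refine Matrix.PosDef.of_dotProduct_mulVec_pos ((Matrix.IsHermitian.fromBlocks₁₁ B D hA).mp h.1) fun x hx => ?_
  have hne : Sum.elim (-((A⁻¹ * B) *ᵥ x)) x ≠ 0 := by
    intro h0
    apply hx
    funext i
    simpa using congrFun h0 (Sum.inr i)
  have hq := h.dotProduct_mulVec_pos hne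
  rw [dotProduct_mulVec, Matrix.schur_complement_eq₁₁ B D _ _ hA, neg_add_cancel,
    dotProduct_zero, zero_add] at hq
  rwa [dotProduct_mulVec]

end JzAux

/-- The cost function `J(W_z) = trace(W_z^H G_z W_z) − 2 log|det [W_s, W_z]|`. -/
noncomputable def Jz {K L : ℕ}
    (Gz : Matrix (Fin K ⊕ Fin L) (Fin K ⊕ Fin L) ℂ)
    (Ws : Matrix (Fin K ⊕ Fin L) (Fin K) ℂ)
    (Wz : Matrix (Fin K ⊕ Fin L) (Fin L) ℂ) : ℝ :=
  (Matrix.trace (Wzᴴ * Gz * Wz)).re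
    - 2 * Real.log ‖(Matrix.fromCols Ws Wz).det‖

/-- If `G_z` is positive definite and `W_s` has full column rank, then
`W_z ↦ trace(W_z^H G_z W_z) − 2 log|det [W_s, W_z]|` is bounded from below on the
set of `W_z` making `[W_s, W_z]` invertible, and attains its minimum there. -/
theorem Jz_bddBelow_and_attains_min (K L : ℕ) (hK : 1 ≤ K) (hL : 1 ≤ L)
    (Gz : Matrix (Fin K ⊕ Fin L) (Fin K ⊕ Fin L) ℂ) (hGz : Gz.PosDef)
    (Ws : Matrix (Fin K ⊕ Fin L) (Fin K) ℂ)
    (hWs : LinearIndependent ℂ Wsᵀ) :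
    (∃ c : ℝ, ∀ Wz : Matrix (Fin K ⊕ Fin L) (Fin L) ℂ,
        IsUnit (Matrix.fromCols Ws Wz).det → c ≤ Jz Gz Ws Wz) ∧
    (∃ Wz₀ : Matrix (Fin K ⊕ Fin L) (Fin L) ℂ,
        IsUnit (Matrix.fromCols Ws Wz₀).det ∧
        ∀ Wz : Matrix (Fin K ⊕ Fin L) (Fin L) ℂ,
          IsUnit (Matrix.fromCols Ws Wz).det → Jz Gz Ws Wz₀ ≤ Jz Gz Ws Wz) := by
  classical
  -- injectivity of `Ws *ᵥ ·`
  have hWsinj : ∀ x : Fin K → ℂ, Ws *ᵥ x = 0 → x = 0 := by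
    intro x hx
    have h := Fintype.linearIndependent_iff.mp hWs x ?_
    · funext i; exact h i
    · have : (∑ i, x i • Wsᵀ i) = Ws *ᵥ x := by
        funext j
        simp [mulVec, dotProduct, mul_comm, Finset.sum_apply]
      rw [this, hx]
  set A := Wsᴴ * Gz * Ws with hAdef
  have hApd : A.PosDef := JzAux.posDef_conj hGz Ws hWsinj
  letI : Invertible A := A.invertibleOfIsUnitDet hApd.det_pos.ne'.isUnit
  set g : ℝ := Gz.det.re with hgdef
  set dA : ℝ := A.det.re with hdAdef
  have hg : 0 < g := JzAux.det_re_pos hGz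
  have hgc : Gz.det = (g : ℂ) := JzAux.det_eq_re hGz
  have hdA : 0 < dA := JzAux.det_re_pos hApd
  have hdAc : A.det = (dA : ℂ) := JzAux.det_eq_re hApd
  set c : ℝ := (L : ℝ) + Real.log g - Real.log dA with hcdef
  have key : ∀ W : Matrix (Fin K ⊕ Fin L) (Fin L) ℂ,
      IsUnit (Matrix.fromCols Ws W).det → c ≤ Jz Gz Ws W := by
    intro W hU
    set B := Wsᴴ * Gz * W with hBdef
    set D := Wᴴ * Gz * W with hDdef
    have hCB : Wᴴ * Gz * Ws = Bᴴ := by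
      rw [hBdef]
      simp [conjTranspose_mul, Matrix.mul_assoc, hGz.1.eq]
    have hblock : (fromCols Ws W)ᴴ * Gz * fromCols Ws W = fromBlocks A B Bᴴ D := by
      rw [conjTranspose_fromCols_eq_fromRows_conjTranspose, fromRows_mul,
        fromRows_mul_fromCols, hCB]
    have hFCinj : ∀ x : (Fin K ⊕ Fin L) → ℂ, (fromCols Ws W) *ᵥ x = 0 → x = 0 := by
      intro x hx
      exact Matrix.mulVec_injective_iff_isUnit.mpr
        ((Matrix.isUnit_iff_isUnit_det _).mpr hU) (by simpa using hx)
    have hSpd : (fromBlocks A B Bᴴ D).PosDef := by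
      rw [← hblock]; exact JzAux.posDef_conj hGz _ hFCinj
    set Sch := D - Bᴴ * A⁻¹ * B with hSchdef
    have hSch : Sch.PosDef := JzAux.schur_posDef hApd.1 hSpd
    set dS : ℝ := Sch.det.re with hdSdef
    have hdS : 0 < dS := JzAux.det_re_pos hSch
    have hdSc : Sch.det = (dS : ℂ) := JzAux.det_eq_re hSch
    set dB : ℂ := (fromCols Ws W).det with hdBdef
    have hdB : dB ≠ 0 := hU.ne_zero
    -- determinant identities
    have hdet1 : (fromBlocks A B Bᴴ D).det = A.det * Sch.det := by
      rw [Matrix.det_fromBlocks₁₁, Matrix.invOf_eq_nonsing_inv]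
    have hdet2 : (fromBlocks A B Bᴴ D).det = star dB * Gz.det * dB := by
      rw [← hblock, Matrix.det_mul, Matrix.det_mul, Matrix.det_conjTranspose]
    have h2 : star dB * Gz.det * dB = A.det * Sch.det := by rw [← hdet2, hdet1]
    have h3 : g * Complex.normSq dB = dA * dS := by
      have h4 : Gz.det * ((Complex.normSq dB : ℝ) : ℂ) = A.det * Sch.det := by
        rw [Complex.normSq_eq_conj_mul_self]
        rw [Complex.star_def] at h2
        linear_combination h2
      rw [hgc, hdAc, hdSc] at h4
      exact_mod_cast h4
    have habs : ‖dB‖ ^ 2 = dA * dS / g := by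
      rw [Complex.sq_norm]
      field_simp
      linarith [h3]
    have hlog : 2 * Real.log (‖dB‖) = Real.log dA + Real.log dS - Real.log g := by
      have h5 : Real.log (‖dB‖ ^ 2) = 2 * Real.log (‖dB‖) := by
        rw [Real.log_pow]
        norm_num
      rw [habs, Real.log_div (by positivity) hg.ne', Real.log_mul hdA.ne' hdS.ne'] at h5
      linarith
    -- trace inequality
    have htrD : D = Sch + Bᴴ * A⁻¹ * B := by rw [hSchdef, sub_add_cancel]
    have htrX : 0 ≤ ((Bᴴ * A⁻¹ * B).trace).re :=
      JzAux.trace_re_nonneg (hApd.inv.posSemidef.conjTranspose_mul_mul_same B)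
    have htrS : (L : ℝ) ≤ Sch.trace.re - Real.log dS := by
      have := JzAux.card_le_trace_re_sub_log_det hSch
      simpa using this
    have hJ : Jz Gz Ws W = D.trace.re - (Real.log dA + Real.log dS - Real.log g) := by
      rw [Jz, ← hlog, ← hdBdef, ← hDdef]
    have hDtr : D.trace.re = Sch.trace.re + ((Bᴴ * A⁻¹ * B).trace).re := by
      rw [htrD, Matrix.trace_add, Complex.add_re]
    rw [hJ, hDtr, hcdef]
    linarith
  -- construction of the minimizer
  have hps := hGz.posSemidef
  obtain ⟨R, hRH, hRR⟩ : ∃ R : Matrix (Fin K ⊕ Fin L) (Fin K ⊕ Fin L) ℂ,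
      R.IsHermitian ∧ R * R = Gz := by
    open scoped MatrixOrder in
    exact ⟨CFC.sqrt Gz, (CFC.sqrt_nonneg Gz).posSemidef.1, CFC.sqrt_mul_sqrt_self Gz hps.nonneg⟩
  have hRdet : IsUnit R.det := by
    have h : R.det * R.det = Gz.det := by rw [← Matrix.det_mul, hRR]
    have hne : R.det ≠ 0 := by
      intro h0
      rw [h0, mul_zero] at h
      exact hGz.det_pos.ne' h.symm
    exact hne.isUnit
  have hRWst : LinearIndependent ℂ (R * Ws)ᵀ := by
    have h1 : ((R * Ws)ᵀ : Fin K → (Fin K ⊕ Fin L) → ℂ) = ⇑R.mulVecLin ∘ Wsᵀ := by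
      funext i
      funext j
      show (R * Ws) j i = (R *ᵥ fun k => Ws k i) j
      simp [Matrix.mul_apply, Matrix.mulVec, dotProduct]
    rw [h1]
    apply hWs.map' R.mulVecLin
    rw [LinearMap.ker_eq_bot]
    intro x y hxy
    exact Matrix.mulVec_injective_iff_isUnit.mpr
      ((Matrix.isUnit_iff_isUnit_det R).mpr hRdet) hxy
  let e : EuclideanSpace ℂ (Fin K ⊕ Fin L) ≃ₗ[ℂ] ((Fin K ⊕ Fin L) → ℂ) :=
    WithLp.linearEquiv 2 ℂ _
  let v : Fin K → EuclideanSpace ℂ (Fin K ⊕ Fin L) := ⇑e.symm ∘ (R * Ws)ᵀ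
  have hv : LinearIndependent ℂ v :=
    hRWst.map' e.symm.toLinearMap (LinearEquiv.ker e.symm)
  set V : Submodule ℂ (EuclideanSpace ℂ (Fin K ⊕ Fin L)) :=
    Submodule.span ℂ (Set.range v) with hVdef
  have hVfin : Module.finrank ℂ V = K := by
    rw [finrank_span_eq_card hv, Fintype.card_fin]
  have hVo : Module.finrank ℂ ↥Vᗮ = L := by
    have h1 := V.finrank_add_finrank_orthogonal
    rw [hVfin, finrank_euclideanSpace] at h1
    simp only [Fintype.card_sum, Fintype.card_fin] at h1
    omega
  let b : OrthonormalBasis (Fin L) ℂ ↥Vᗮ :=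
    (stdOrthonormalBasis ℂ ↥Vᗮ).reindex (finCongr hVo)
  let Y : Matrix (Fin K ⊕ Fin L) (Fin L) ℂ :=
    Matrix.of fun i j => (e ((b j : EuclideanSpace ℂ (Fin K ⊕ Fin L)))) i
  have hYY : Yᴴ * Y = 1 := by
    ext i j
    have h1 : (Yᴴ * Y) i j = ∑ k, (starRingEnd ℂ) (Y k i) * Y k j := by
      simp [Matrix.mul_apply, Matrix.conjTranspose_apply]
    have h2 : (inner ℂ (b i : EuclideanSpace ℂ (Fin K ⊕ Fin L))
        (b j : EuclideanSpace ℂ (Fin K ⊕ Fin L)) : ℂ)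
        = ∑ k, (starRingEnd ℂ) (Y k i) * Y k j := by
      rw [PiLp.inner_apply]
      simp only [RCLike.inner_apply']
      rfl
    rw [h1, ← h2, ← Submodule.coe_inner, orthonormal_iff_ite.mp b.orthonormal i j]
    simp [Matrix.one_apply]
  have hRWsY : (R * Ws)ᴴ * Y = 0 := by
    ext i j
    have hmem : v i ∈ V := Submodule.subset_span (Set.mem_range_self i)
    have h0 : (inner ℂ (v i) ((b j : EuclideanSpace ℂ (Fin K ⊕ Fin L))) : ℂ) = 0 :=
      Submodule.inner_right_of_mem_orthogonal hmem (b j).2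
    have h2 : (inner ℂ (v i) ((b j : EuclideanSpace ℂ (Fin K ⊕ Fin L))) : ℂ)
        = ∑ k, (starRingEnd ℂ) ((R * Ws) k i) * Y k j := by
      rw [PiLp.inner_apply]
      simp only [RCLike.inner_apply']
      rfl
    have h1 : ((R * Ws)ᴴ * Y) i j = ∑ k, (starRingEnd ℂ) ((R * Ws) k i) * Y k j := by
      rw [Matrix.mul_apply]
      apply Finset.sum_congr rfl
      intro k _
      rw [Matrix.conjTranspose_apply]
      rfl
    rw [h1, ← h2, h0, Matrix.zero_apply]
  set W₀ : Matrix (Fin K ⊕ Fin L) (Fin L) ℂ := R⁻¹ * Y with hW₀def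
  have hGW₀ : Gz * W₀ = R * Y := by
    rw [hW₀def, ← hRR, Matrix.mul_assoc, ← Matrix.mul_assoc R R⁻¹ Y,
      Matrix.mul_nonsing_inv _ hRdet, Matrix.one_mul]
  have hWsGW₀ : Wsᴴ * Gz * W₀ = 0 := by
    rw [Matrix.mul_assoc, hGW₀, ← Matrix.mul_assoc]
    have hWR : Wsᴴ * R = (R * Ws)ᴴ := by rw [conjTranspose_mul, hRH.eq]
    rw [hWR, hRWsY]
  have hW₀GW₀ : W₀ᴴ * Gz * W₀ = 1 := by
    rw [Matrix.mul_assoc, hGW₀, hW₀def, conjTranspose_mul, conjTranspose_nonsing_inv, hRH.eq,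
      Matrix.mul_assoc, ← Matrix.mul_assoc R⁻¹ R Y, Matrix.nonsing_inv_mul _ hRdet,
      Matrix.one_mul, hYY]
  have hCB₀ : W₀ᴴ * Gz * Ws = 0 := by
    have h := congrArg Matrix.conjTranspose hWsGW₀
    simpa [conjTranspose_mul, Matrix.mul_assoc, hGz.1.eq] using h
  have hblock₀ : (fromCols Ws W₀)ᴴ * Gz * fromCols Ws W₀
      = fromBlocks A 0 0 (1 : Matrix (Fin L) (Fin L) ℂ) := by
    rw [conjTranspose_fromCols_eq_fromRows_conjTranspose, fromRows_mul,
      fromRows_mul_fromCols, hWsGW₀, hCB₀, hW₀GW₀]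
  set d₀ : ℂ := (fromCols Ws W₀).det with hd₀def
  have hdet₀ : star d₀ * Gz.det * d₀ = A.det := by
    have h1 := congrArg Matrix.det hblock₀
    rw [Matrix.det_mul, Matrix.det_mul, Matrix.det_conjTranspose,
      Matrix.det_fromBlocks_zero₂₁, Matrix.det_one, mul_one] at h1
    exact h1
  have h3₀ : g * Complex.normSq d₀ = dA := by
    have h4 : Gz.det * ((Complex.normSq d₀ : ℝ) : ℂ) = A.det := by
      rw [Complex.normSq_eq_conj_mul_self]
      rw [Complex.star_def] at hdet₀
      linear_combination hdet₀
    rw [hgc, hdAc] at h4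
    exact_mod_cast h4
  have hd₀ : d₀ ≠ 0 := by
    intro h0
    rw [h0] at h3₀
    simp at h3₀
    linarith
  have hU₀ : IsUnit (fromCols Ws W₀).det := hd₀.isUnit
  have habs₀ : ‖d₀‖ ^ 2 = dA / g := by
    rw [Complex.sq_norm]
    field_simp
    linarith [h3₀]
  have hJ₀ : Jz Gz Ws W₀ = c := by
    rw [Jz, hW₀GW₀, Matrix.trace_one]
    have hlog₀ : 2 * Real.log (‖d₀‖) = Real.log dA - Real.log g := by
      have h5 : Real.log (‖d₀‖ ^ 2) = 2 * Real.log (‖d₀‖) := by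
        rw [Real.log_pow]
        norm_num
      rw [habs₀, Real.log_div hdA.ne' hg.ne'] at h5
      linarith
    rw [← hd₀def, hlog₀, hcdef]
    simp
    ring
  exact ⟨⟨c, key⟩, W₀, hU₀, fun W hW => by rw [hJ₀]; exact key W hW⟩
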